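/- For 1 ≤ m ≤ n−1 and t = q − q^{−1}, the following identity of H_m-valued rational functions in a variable u holds: ((u − q² y_m)(u − q^{−2} y_m)/(u − y_m)²) · Tr_{m+1}((u − y_{m+1})^{−1}) = Tr_m((u − y_m)^{−1}) + t(1 − Qt) y_m/(u − y_m)², where the conditional expectations are extended ℂ(q)(u)-linearly to rational functions with values in the Hecke algebras (for m = 1, Tr_1((u − y_1)^{−1}) = Q/(u − 1)). -/
import Mathlib


noncomputable section

open scoped Classical

namespace HeckePaper

abbrev F : Type := RatFunc ℂ
def q : F := RatFunc.X

inductive Rel : FreeAlgebra F ℕ → FreeAlgebra F ℕ → Prop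
  | braid (i : ℕ) : Rel (FreeAlgebra.ι F i * FreeAlgebra.ι F (i + 1) * FreeAlgebra.ι F i)
      (FreeAlgebra.ι F (i + 1) * FreeAlgebra.ι F i * FreeAlgebra.ι F (i + 1))
  | comm (i j : ℕ) (h : i + 1 < j) :
      Rel (FreeAlgebra.ι F i * FreeAlgebra.ι F j) (FreeAlgebra.ι F j * FreeAlgebra.ι F i)
  | quad (i : ℕ) :
      Rel (FreeAlgebra.ι F i * FreeAlgebra.ι F i) (1 + (q - q⁻¹) • FreeAlgebra.ι F i)

abbrev H : Type := RingQuot Rel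
def T (i : ℕ) : H := RingQuot.mkAlgHom F Rel (FreeAlgebra.ι F i)
def cc : F →+* H := algebraMap F H
def Tinv (i : ℕ) : H := T i - (q - q⁻¹) • 1

def y : ℕ → H
  | 0 => 1
  | 1 => 1
  | (k + 2) => T (k + 1) * y (k + 1) * T (k + 1)

def Tdesc : ℕ → H
  | 0 => 1
  | (k + 1) => T (k + 1) * Tdesc k


def Tasc : ℕ → H
  | 0 => 1
  | (k + 1) => Tasc k * T (k + 1)

/-- The reversed-order product `(T_1 ⋯ T_{k-2} T_{k-1})(T_1 ⋯ T_{k-2}) ⋯ (T_1 T_2) T_1`. -/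
def Tw' : ℕ → H
  | 0 => 1
  | (k + 1) => Tasc k * Tw' k

def Tw : ℕ → H
  | 0 => 1
  | (k + 1) => Tw k * Tdesc k

def TT (i : ℕ) (x z : F) : H := (z - x)⁻¹ • (z • T i - x • Tinv i)

/-! ### Tableaux -/

/-- The q-content `q^{2(j-i)}` of a cell `(i,j)` (rows and columns indexed from 0). -/
def qcont (c : ℕ × ℕ) : F := q ^ (2 * ((c.2 : ℤ) - (c.1 : ℤ)))

/-- A standard tableau with `n` cells: `entry k` is the cell (row, column, 0-indexed)
containing the number `k`, for `1 ≤ k ≤ n`.  The requirement that the set of cells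
occupied by `1, …, k` is a Young diagram for each `k` is equivalent to the entries
increasing along rows and down columns. -/
structure StandardTableau (n : ℕ) where
  entry : ℕ → ℕ × ℕ
  injOn : Set.InjOn entry (Set.Icc 1 n)
  lower : ∀ k, k ≤ n → IsLowerSet {c : ℕ × ℕ | ∃ j, 1 ≤ j ∧ j ≤ k ∧ entry j = c}

/-- `sig T k` is the q-content `σ_k` of the cell of `T` containing `k`. -/
def sig {n : ℕ} (T : StandardTableau n) (k : ℕ) : F := qcont (T.entry k)

/-- The standard tableau obtained by removing the cell containing the largest entry. -/
def restrict {n : ℕ} (T : StandardTableau n) : StandardTableau (n - 1) where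
  entry := T.entry
  injOn := T.injOn.mono (Set.Icc_subset_Icc_right (Nat.sub_le n 1))
  lower := fun k hk => T.lower k (hk.trans (Nat.sub_le n 1))

/-- The shape of a standard tableau, as a finite set of cells. -/
def shapeF {n : ℕ} (T : StandardTableau n) : Finset (ℕ × ℕ) := (Finset.Icc 1 n).image T.entry

/-- The shape of a standard tableau, as a Young diagram. -/
def shapeD {n : ℕ} (T : StandardTableau n) : YoungDiagram where
  cells := shapeF T
  isLowerSet := by
    have h := T.lower n le_rfl
    have he : (↑(shapeF T) : Set (ℕ × ℕ)) = {c : ℕ × ℕ | ∃ j, 1 ≤ j ∧ j ≤ n ∧ T.entry j = c} := by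
      ext c
      simp only [shapeF, Finset.coe_image, Set.mem_image, Finset.mem_coe, Finset.mem_Icc,
        Set.mem_setOf_eq]
      constructor
      · rintro ⟨j, ⟨h1, h2⟩, rfl⟩; exact ⟨j, h1, h2, rfl⟩
      · rintro ⟨j, h1, h2, rfl⟩; exact ⟨j, ⟨h1, h2⟩, rfl⟩
    rw [he]; exact h

/-- A cell is addable to a diagram if adjoining it yields again a diagram. -/
def addable (μ : Finset (ℕ × ℕ)) (c : ℕ × ℕ) : Prop :=
  c ∉ μ ∧ IsLowerSet ((↑μ ∪ {c}) : Set (ℕ × ℕ))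

/-- The (finite) set of addable cells of a diagram. -/
def addables (μ : Finset (ℕ × ℕ)) : Finset (ℕ × ℕ) :=
  (Finset.range (μ.card + 1) ×ˢ Finset.range (μ.card + 1)).filter (addable μ)

lemma commute_lin (m : ℕ) (a b c d : F) :
    Commute (cc a * (y m - cc b)) (cc c * (y m - cc d)) := by
  have h1 : ∀ (r : F) (x : H), Commute (cc r) x := fun r x => Algebra.commute_algebraMap_left r x
  have hyd : Commute (y m) (y m - cc d) := (Commute.refl (y m)).sub_right (h1 d (y m)).symm
  have h2 : Commute (y m - cc b) (y m - cc d) := hyd.sub_left (h1 b (y m - cc d))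
  exact (h1 a _).mul_left (((h1 c _).symm).mul_right h2)

/-- The primitive idempotents `E_T` of the Hecke algebras, defined inductively:
`E_T = E_U ∏_{ρ} (y_n - ρ)/(σ_n - ρ)`, the product over the q-contents `ρ` of the
addable cells of the shape of `U` other than the cell of `n`. -/
def Eelt : (n : ℕ) → StandardTableau n → H
  | 0, _ => 1
  | (n + 1), T =>
      Eelt n (restrict T) *
        Finset.noncommProd ((addables (shapeF (restrict T))).erase (T.entry (n + 1)))
          (fun c => cc ((qcont (T.entry (n + 1)) - qcont c)⁻¹) * (y (n + 1) - cc (qcont c)))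
          (by intro a _ b _ _; exact commute_lin (n + 1) _ _ _ _)

/-! ### Hooks and the normalization factor `f(λ)` -/

/-- The quantum integer `[m]_q = (q^m - q^{-m})/(q - q^{-1})`. -/
def qnum (m : ℕ) : F := (q ^ (m : ℤ) - q ^ (-(m : ℤ))) / (q - q⁻¹)

/-- The hook length of the cell `c` of `μ` (cells 0-indexed). -/
def hook (μ : YoungDiagram) (c : ℕ × ℕ) : ℕ := μ.rowLen c.1 + μ.colLen c.2 - c.1 - c.2 - 1

/-- The normalization factor `f(λ) = ∏_{α ∈ λ} q^{c_α} / [h_α]_q`. -/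
def fla (μ : YoungDiagram) : F := ∏ c ∈ μ.cells, (q ^ ((c.2 : ℤ) - (c.1 : ℤ)) / qnum (hook μ c))

/-! ### The function Ψ -/

/-- The inner factor `T_k(u_1,u_{k+1}) T_{k-1}(u_2,u_{k+1}) ⋯ T_1(u_k,u_{k+1})`. -/
def innerProd (k : ℕ) (u : ℕ → F) : H :=
  ((List.range k).map (fun i => TT (k - i) (u (i + 1)) (u (k + 1)))).prod

/-- The function `Ψ(u_1,…,u_n)`. -/
def PsiFun (n : ℕ) (u : ℕ → F) : H :=
  ((List.range (n - 1)).map (fun j => innerProd (j + 1) u)).prod * Ring.inverse (Tw n)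

/-! ### Conditional expectations and the Ocneanu–Markov trace -/

/-- The subalgebra `H_m ⊆ H` generated by `T_1, …, T_{m-1}`. -/
def Hsub (m : ℕ) : Subalgebra F H := Algebra.adjoin F (T '' {i | 1 ≤ i ∧ i + 1 ≤ m})

/-- The defining properties of the family of conditional expectations
`Tr_m : H_m → H_{m-1}` with parameter `Q`; `tr m` represents `Tr_m` (defined on all
of `H`, but its characterizing properties concern the subalgebras `H_m`). -/
structure IsCondExp (Q : F) (tr : ℕ → H →ₗ[F] H) : Prop where
  mem : ∀ m, 1 ≤ m → ∀ z ∈ Hsub m, tr m z ∈ Hsub (m - 1)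
  bimod : ∀ m, 1 ≤ m → ∀ X ∈ Hsub (m - 1), ∀ Y ∈ Hsub (m - 1), ∀ Z ∈ Hsub m,
      tr m (X * Z * Y) = X * tr m Z * Y
  scalar : ∀ m, 1 ≤ m → ∀ X ∈ Hsub (m - 1), tr m X = Q • X
  conj : ∀ m, 1 ≤ m → ∀ X ∈ Hsub m, tr (m + 1) (T m * X * Tinv m) = tr m X
  conj' : ∀ m, 1 ≤ m → ∀ X ∈ Hsub m, tr (m + 1) (Tinv m * X * T m) = tr m X
  genOne : ∀ m, 1 ≤ m → tr (m + 1) (T m) = 1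
  markov : ∀ m, 1 ≤ m → ∀ Z ∈ Hsub (m + 1),
      tr m (tr (m + 1) (T m * Z)) = tr m (tr (m + 1) (Z * T m))

/-- `trComp tr n = Tr_1 ∘ Tr_2 ∘ ⋯ ∘ Tr_n`, the Ocneanu–Markov trace `Tr^{(n)}`
(with values in the scalars `ℂ(q)·1 ⊆ H`). -/
def trComp (tr : ℕ → H →ₗ[F] H) : ℕ → H → H
  | 0 => id
  | (m + 1) => fun x => trComp tr m (tr (m + 1) x)


set_option maxHeartbeats 1000000

/-! ### Auxiliary lemmas -/

lemma T_sq (i : ℕ) : T i * T i = 1 + (q - q⁻¹) • T i := by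
  have h := RingQuot.mkAlgHom_rel F (Rel.quad i)
  simpa [T, map_mul, map_add, map_one, map_smul] using h

lemma T_braid (i : ℕ) : T i * T (i + 1) * T i = T (i + 1) * T i * T (i + 1) := by
  have h := RingQuot.mkAlgHom_rel F (Rel.braid i)
  simpa [T, map_mul] using h

lemma T_comm {i j : ℕ} (h : i + 1 < j) : Commute (T i) (T j) := by
  have h2 := RingQuot.mkAlgHom_rel F (Rel.comm i j h)
  simpa [T, map_mul, Commute, SemiconjBy] using h2

lemma T_mul_Tinv (i : ℕ) : T i * Tinv i = 1 := by
  rw [Tinv, mul_sub, T_sq, mul_smul_comm, mul_one]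
  abel

lemma Tinv_mul_T (i : ℕ) : Tinv i * T i = 1 := by
  rw [Tinv, sub_mul, T_sq, smul_mul_assoc, one_mul]
  abel

lemma commute_y_T : ∀ k, ∀ j, k < j → Commute (y k) (T j) := by
  intro k
  induction k using Nat.strong_induction_on with
  | _ k ih =>
    rcases k with _ | (_ | k)
    · intro j _; rw [show y 0 = 1 from rfl]; exact Commute.one_left _
    · intro j _; rw [show y 1 = 1 from rfl]; exact Commute.one_left _
    · intro j hj
      have h1 : Commute (T (k + 1)) (T j) := T_comm (by omega)
      have h2 : Commute (y (k + 1)) (T j) := ih (k + 1) (by omega) j (by omega)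
      rw [show y (k + 2) = T (k + 1) * y (k + 1) * T (k + 1) from rfl]
      exact (h1.mul_left h2).mul_left h1

lemma commute_y_y : ∀ m, Commute (y m) (y (m + 1)) := by
  intro m
  induction m using Nat.strong_induction_on with
  | _ m ih =>
    rcases m with _ | (_ | k)
    · rw [show y 0 = 1 from rfl]; exact Commute.one_left _
    · rw [show y 1 = 1 from rfl]; exact Commute.one_left _
    · set a := T (k + 1) with ha
      set b := T (k + 2) with hb
      set z := y (k + 1) with hz
      have hy2 : y (k + 2) = a * z * a := rfl
      have hy3 : y (k + 3) = b * (a * z * a) * b := by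
        rw [show y (k + 3) = T (k + 2) * y (k + 2) * T (k + 2) from rfl, hy2]
      have hzb : ∀ x : H, z * (b * x) = b * (z * x) := by
        intro x
        have h := (commute_y_T (k + 1) (k + 2) (by omega)).eq
        rw [← mul_assoc, h, mul_assoc]
      have hbab : ∀ x : H, a * (b * (a * x)) = b * (a * (b * x)) := by
        intro x
        have h := T_braid (k + 1)
        calc a * (b * (a * x)) = a * b * a * x := by simp only [mul_assoc]
          _ = b * a * b * x := by rw [h]
          _ = b * (a * (b * x)) := by simp only [mul_assoc]
      have hIH : ∀ x : H, z * (a * (z * (a * x))) = a * (z * (a * (z * x))) := by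
        intro x
        have h : z * (a * z * a) = a * z * a * z := by
          have h0 := (ih (k + 1) (by omega)).eq
          rw [hy2] at h0; exact h0
        calc z * (a * (z * (a * x))) = z * (a * z * a) * x := by simp only [mul_assoc]
          _ = a * z * a * z * x := by rw [h]
          _ = a * (z * (a * (z * x))) := by simp only [mul_assoc]
      have tailclaim : ∀ x : H,
          z * (a * (b * (z * (a * (b * x))))) = a * (z * (a * (b * (z * (a * x))))) := by
        intro x
        rw [← hzb (a * (b * x)), ← hbab x, hIH (b * (a * x)), hzb (a * x)]
      have goal : (a * z * a) * (b * (a * z * a) * b) = (b * (a * z * a) * b) * (a * z * a) := by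
        have htail := tailclaim 1
        simp only [mul_one] at htail
        simp only [mul_assoc]
        -- LHS : a * (z * (a * (b * (a * (z * (a * b))))))
        -- RHS : b * (a * (z * (a * (b * (a * (z * a))))))
        rw [hbab (z * (a * b)), hzb (a * (b * (z * (a * b)))),
            hbab (z * a), hzb (a * (b * (z * a))), ← hbab (z * (a * (b * (z * a))))]
        rw [htail]
      rw [show (k + 1 + 1 : ℕ) = k + 2 from rfl, show (k + 2 + 1 : ℕ) = k + 3 from rfl,
        hy2, hy3]
      exact goal

/-! ### Finite spanning sets for the subalgebras `Hsub` -/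

def Sset : ℕ → Set H
  | 0 => {1}
  | (k + 1) => Sset k ∪ Set.image2 (fun a b => a * T k * b) (Sset k) (Sset k)

lemma Sset_finite : ∀ k, (Sset k).Finite := by
  intro k
  induction k with
  | zero => exact Set.finite_singleton 1
  | succ k ih => exact ih.union (Set.Finite.image2 _ ih ih)

lemma one_mem_Sset : ∀ k, (1 : H) ∈ Sset k := by
  intro k
  induction k with
  | zero => exact rfl
  | succ k ih => exact Or.inl ih

lemma Sset_mono_succ (k : ℕ) : Sset k ⊆ Sset (k + 1) := Set.subset_union_left

lemma Sset_mono {k l : ℕ} (h : k ≤ l) : Sset k ⊆ Sset l := by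
  induction l with
  | zero => intro x hx; obtain rfl : k = 0 := Nat.le_zero.mp h; exact hx
  | succ l ih =>
    rcases Nat.eq_or_lt_of_le h with rfl | h'
    · exact fun _ hx => hx
    · exact fun x hx => Sset_mono_succ l (ih (by omega) hx)

def W (k : ℕ) : Submodule F H := Submodule.span F (Sset k)

lemma W_mono {k l : ℕ} (h : k ≤ l) : W k ≤ W l :=
  Submodule.span_mono (Sset_mono h)

lemma one_mem_W (k : ℕ) : (1 : H) ∈ W k := Submodule.subset_span (one_mem_Sset k)

lemma commute_Sset : ∀ k, ∀ x ∈ Sset k, ∀ j, k < j → Commute x (T j) := by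
  intro k
  induction k with
  | zero =>
    intro x hx j _
    rcases hx with rfl
    exact Commute.one_left _
  | succ k ih =>
    intro x hx j hj
    rcases hx with hx | hx
    · exact ih x hx j (by omega)
    · obtain ⟨a, ha, b, hb, rfl⟩ := hx
      exact ((ih a ha j (by omega)).mul_left (T_comm (by omega))).mul_left (ih b hb j (by omega))

lemma commute_W {k : ℕ} {x : H} (hx : x ∈ W k) {j : ℕ} (hj : k < j) : Commute x (T j) := by
  induction hx using Submodule.span_induction with
  | mem z hz => exact commute_Sset k z hz j hj
  | zero => exact Commute.zero_left _
  | add a b _ _ iha ihb => exact iha.add_left ihb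
  | smul c a _ iha => exact iha.smul_left c

lemma sandwich_set {k : ℕ} {p r : H} (hp : p ∈ Sset k) (hr : r ∈ Sset k) :
    p * T k * r ∈ Sset (k + 1) :=
  Or.inr (Set.mem_image2_of_mem hp hr)

lemma sandwich {k : ℕ} {p r : H} (hp : p ∈ W k) (hr : r ∈ W k) :
    p * T k * r ∈ W (k + 1) := by
  induction hp using Submodule.span_induction with
  | mem x hx =>
    induction hr using Submodule.span_induction with
    | mem z hz => exact Submodule.subset_span (sandwich_set hx hz)
    | zero => rw [mul_zero]; exact zero_mem _
    | add a b _ _ iha ihb => rw [mul_add]; exact add_mem iha ihb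
    | smul c a _ iha => rw [mul_smul_comm]; exact Submodule.smul_mem _ _ iha
  | zero => rw [zero_mul, zero_mul]; exact zero_mem _
  | add a b _ _ iha ihb => rw [add_mul, add_mul]; exact add_mem iha ihb
  | smul c a _ iha => rw [smul_mul_assoc, smul_mul_assoc]; exact Submodule.smul_mem _ _ iha

lemma W_mul : ∀ k, ∀ x ∈ W k, ∀ z ∈ W k, x * z ∈ W k := by
  intro k
  induction k with
  | zero =>
    intro x hx z hz
    induction hx using Submodule.span_induction with
    | mem a ha => rcases ha with rfl; rw [one_mul]; exact hz
    | zero => rw [zero_mul]; exact zero_mem _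
    | add a b _ _ iha ihb => rw [add_mul]; exact add_mem iha ihb
    | smul c a _ iha => rw [smul_mul_assoc]; exact Submodule.smul_mem _ _ iha
  | succ k ih =>
    have hswap : ∀ (j : ℕ) (x w : H), Commute w (T j) → T j * (w * x) = w * (T j * x) := by
      intro j x w hw
      rw [← mul_assoc, ← hw.eq, mul_assoc]
    have TmidT : ∀ e ∈ W k, T k * e * T k ∈ W (k + 1) := by
      intro e he
      induction he using Submodule.span_induction with
      | mem x hx =>
        rcases k with _ | j
        · rcases hx with rfl
          rw [mul_one, T_sq]
          refine add_mem (one_mem_W 1) (Submodule.smul_mem _ _ ?_)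
          have h := sandwich_set (one_mem_Sset 0) (one_mem_Sset 0)
          rw [one_mul, mul_one] at h
          exact Submodule.subset_span h
        · rcases hx with hx | hx
          · have hc : Commute x (T (j + 1)) := commute_Sset j x hx (j + 1) (by omega)
            have heq : T (j + 1) * x * T (j + 1) = x + (q - q⁻¹) • (x * T (j + 1)) := by
              rw [← hc.eq, mul_assoc, T_sq, mul_add, mul_one, mul_smul_comm]
            rw [heq]
            refine add_mem (Submodule.subset_span (Sset_mono (by omega) hx)) (Submodule.smul_mem _ _ ?_)
            have h := sandwich (Submodule.subset_span (Sset_mono_succ j hx) : x ∈ W (j+1)) (one_mem_W (j + 1))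
            rwa [mul_one] at h
          · obtain ⟨a, ha, b, hb, rfl⟩ := hx
            have hca : Commute a (T (j + 1)) := commute_Sset j a ha (j + 1) (by omega)
            have hcb : Commute b (T (j + 1)) := commute_Sset j b hb (j + 1) (by omega)
            have hbr : ∀ x : H, T (j + 1) * (T j * (T (j + 1) * x)) = T j * (T (j + 1) * (T j * x)) := by
              intro x
              calc T (j + 1) * (T j * (T (j + 1) * x)) = T (j + 1) * T j * T (j + 1) * x := by
                    simp only [mul_assoc]
                _ = T j * T (j + 1) * T j * x := by rw [← T_braid j]
                _ = T j * (T (j + 1) * (T j * x)) := by simp only [mul_assoc]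
            have heq : T (j + 1) * (a * T j * b) * T (j + 1) = (a * T j) * T (j + 1) * (T j * b) := by
              simp only [mul_assoc]
              rw [hswap (j + 1) (T j * (b * T (j + 1))) a hca, hcb.eq, hbr b]
            rw [heq]
            have h1 : a * T j ∈ W (j + 1) := by
              have h := sandwich (Submodule.subset_span ha : a ∈ W j) (one_mem_W j)
              rwa [mul_one] at h
            have h2 : T j * b ∈ W (j + 1) := by
              have h := sandwich (one_mem_W j) (Submodule.subset_span hb : b ∈ W j)
              rwa [one_mul] at h
            exact sandwich h1 h2
      | zero => rw [mul_zero, zero_mul]; exact zero_mem _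
      | add a b _ _ iha ihb => rw [mul_add, add_mul]; exact add_mem iha ihb
      | smul c a _ iha => rw [mul_smul_comm, smul_mul_assoc]; exact Submodule.smul_mem _ _ iha
    have mulW_left : ∀ a ∈ W k, ∀ w ∈ W (k + 1), a * w ∈ W (k + 1) := by
      intro a ha w hw
      induction hw using Submodule.span_induction with
      | mem x hx =>
        rcases hx with hx | hx
        · exact W_mono (Nat.le_succ k) (ih a ha x (Submodule.subset_span hx))
        · obtain ⟨c, hc, d, hd, rfl⟩ := hx
          have heq : a * (c * T k * d) = (a * c) * T k * d := by simp only [mul_assoc]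
          rw [heq]
          exact sandwich (ih a ha c (Submodule.subset_span hc)) (Submodule.subset_span hd)
      | zero => rw [mul_zero]; exact zero_mem _
      | add x1 x2 _ _ ih1 ih2 => rw [mul_add]; exact add_mem ih1 ih2
      | smul c x1 _ ih1 => rw [mul_smul_comm]; exact Submodule.smul_mem _ _ ih1
    have mulW_right : ∀ w ∈ W (k + 1), ∀ d ∈ W k, w * d ∈ W (k + 1) := by
      intro w hw d hd
      induction hw using Submodule.span_induction with
      | mem x hx =>
        rcases hx with hx | hx
        · exact W_mono (Nat.le_succ k) (ih x (Submodule.subset_span hx) d hd)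
        · obtain ⟨c, hc, e, he, rfl⟩ := hx
          have heq : (c * T k * e) * d = c * T k * (e * d) := by simp only [mul_assoc]
          rw [heq]
          exact sandwich (Submodule.subset_span hc) (ih e (Submodule.subset_span he) d hd)
      | zero => rw [zero_mul]; exact zero_mem _
      | add x1 x2 _ _ ih1 ih2 => rw [add_mul]; exact add_mem ih1 ih2
      | smul c x1 _ ih1 => rw [smul_mul_assoc]; exact Submodule.smul_mem _ _ ih1
    intro x hx z hz
    induction hx using Submodule.span_induction with
    | mem x1 hx1 =>
      rcases hx1 with hx1 | hx1
      · exact mulW_left x1 (Submodule.subset_span hx1) z hz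
      · obtain ⟨a, ha, b, hb, rfl⟩ := hx1
        induction hz using Submodule.span_induction with
        | mem z1 hz1 =>
          rcases hz1 with hz1 | hz1
          · exact mulW_right _ (Submodule.subset_span (Or.inr (Set.mem_image2_of_mem ha hb)))
              z1 (Submodule.subset_span hz1)
          · obtain ⟨c, hc, d, hd, rfl⟩ := hz1
            have heq : (a * T k * b) * (c * T k * d) = a * (T k * (b * c) * T k) * d := by
              simp only [mul_assoc]
            rw [heq]
            have h1 : T k * (b * c) * T k ∈ W (k + 1) :=
              TmidT _ (ih b (Submodule.subset_span hb) c (Submodule.subset_span hc))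
            exact mulW_right _ (mulW_left a (Submodule.subset_span ha) _ h1)
              d (Submodule.subset_span hd)
        | zero => rw [mul_zero]; exact zero_mem _
        | add z1 z2 _ _ ih1 ih2 => rw [mul_add]; exact add_mem ih1 ih2
        | smul c z1 _ ih1 => rw [mul_smul_comm]; exact Submodule.smul_mem _ _ ih1
    | zero => rw [zero_mul]; exact zero_mem _
    | add x1 x2 _ _ ih1 ih2 => rw [add_mul]; exact add_mem ih1 ih2
    | smul c x1 _ ih1 => rw [smul_mul_assoc]; exact Submodule.smul_mem _ _ ih1

lemma T_mem_Sset (i : ℕ) : T i ∈ Sset (i + 1) := by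
  have h := sandwich_set (one_mem_Sset i) (one_mem_Sset i)
  rwa [one_mul, mul_one] at h

lemma Hsub_le_W (m : ℕ) : ∀ x ∈ Hsub m, x ∈ W m := by
  intro x hx
  induction hx using Algebra.adjoin_induction with
  | mem x hx =>
    obtain ⟨i, ⟨hi1, hi2⟩, rfl⟩ := hx
    exact Submodule.subset_span (Sset_mono hi2 (T_mem_Sset i))
  | algebraMap r =>
    rw [Algebra.algebraMap_eq_smul_one]
    exact Submodule.smul_mem _ _ (one_mem_W m)
  | add a b _ _ iha ihb => exact add_mem iha ihb
  | mul a b _ _ iha ihb => exact W_mul m a iha b ihb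

lemma Hsub_fg (m : ℕ) : (Subalgebra.toSubmodule (Hsub m)).FG := by
  rw [Submodule.fg_iff_finiteDimensional]
  haveI : FiniteDimensional F (W m) := FiniteDimensional.span_of_finite F (Sset_finite m)
  exact Submodule.finiteDimensional_of_le (fun x hx => Hsub_le_W m x hx)

lemma isIntegral_Hsub {m : ℕ} {x : H} (hx : x ∈ Hsub m) : IsIntegral F x :=
  IsIntegral.of_mem_of_fg _ (Hsub_fg m) x hx

lemma commute_aeval (x : H) (p : Polynomial F) :
    x * Polynomial.aeval x p = Polynomial.aeval x p * x := by
  have h1 : x * Polynomial.aeval x p = Polynomial.aeval x (Polynomial.X * p) := by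
    rw [map_mul, Polynomial.aeval_X]
  have h2 : Polynomial.aeval x p * x = Polynomial.aeval x (p * Polynomial.X) := by
    rw [map_mul, Polynomial.aeval_X]
  rw [h1, h2, mul_comm]

lemma inverse_eq_of {x v : H} (hu : IsUnit x) (hv : x * v = 1) : Ring.inverse x = v := by
  have h := Ring.inverse_mul_cancel x hu
  calc Ring.inverse x = Ring.inverse x * (x * v) := by rw [hv, mul_one]
    _ = (Ring.inverse x * x) * v := by rw [mul_assoc]
    _ = v := by rw [h, one_mul]

lemma inverse_mem_of_coeff {S : Subalgebra F H} {x : H} (hx : x ∈ S) (hu : IsUnit x)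
    (p : Polynomial F) (hc : p.coeff 0 ≠ 0) (hev : Polynomial.aeval x p = 0) :
    Ring.inverse x ∈ S := by
  set w := Polynomial.aeval x p.divX with hw
  have hkey : x * w + algebraMap F H (p.coeff 0) = 0 := by
    have h0 := Polynomial.X_mul_divX_add (p := p)
    have h1 : Polynomial.aeval x (Polynomial.X * p.divX + Polynomial.C (p.coeff 0)) = 0 := by
      rw [h0, hev]
    rwa [map_add, map_mul, Polynomial.aeval_X, Polynomial.aeval_C] at h1
  have hxw : x * w = - algebraMap F H (p.coeff 0) := by
    rw [eq_neg_iff_add_eq_zero]; exact hkey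
  set v := algebraMap F H (-(p.coeff 0)⁻¹) * w with hv
  have hcentral : ∀ (s : F) (z : H), z * algebraMap F H s = algebraMap F H s * z :=
    fun s z => ((Algebra.commute_algebraMap_left s z).eq).symm
  have hxv : x * v = 1 := by
    calc x * v = algebraMap F H (-(p.coeff 0)⁻¹) * (x * w) := by
          rw [hv, ← mul_assoc, hcentral, mul_assoc]
      _ = algebraMap F H (-(p.coeff 0)⁻¹) * (algebraMap F H (-(p.coeff 0))) := by
          rw [hxw, ← map_neg]
      _ = algebraMap F H ((-(p.coeff 0)⁻¹) * (-(p.coeff 0))) := by rw [← map_mul]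
      _ = 1 := by rw [neg_mul_neg, inv_mul_cancel₀ hc, map_one]
  have hres : Ring.inverse x = v := inverse_eq_of hu hxv
  rw [hres, hv]
  have hadj : Algebra.adjoin F {x} ≤ S := Algebra.adjoin_le (Set.singleton_subset_iff.mpr hx)
  exact mul_mem (S.algebraMap_mem _) (hadj (Polynomial.aeval_mem_adjoin_singleton F x))

lemma inverse_mem_aux : ∀ (N : ℕ) (x : H) (S : Subalgebra F H), x ∈ S → IsUnit x →
    ∀ p : Polynomial F, p.natDegree ≤ N → p ≠ 0 → Polynomial.aeval x p = 0 →
    Ring.inverse x ∈ S := by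
  intro N
  induction N with
  | zero =>
    intro x S hx hu p hdeg hp0 hev
    by_cases hc : p.coeff 0 = 0
    · exfalso
      apply hp0
      have h := Polynomial.eq_C_of_natDegree_eq_zero (Nat.le_zero.mp hdeg)
      rw [h, hc, map_zero]
    · exact inverse_mem_of_coeff hx hu p hc hev
  | succ N ihN =>
    intro x S hx hu p hdeg hp0 hev
    by_cases hc : p.coeff 0 = 0
    · have hps : p = Polynomial.X * p.divX := by
        conv_lhs => rw [← Polynomial.X_mul_divX_add (p := p)]
        rw [hc, map_zero, add_zero]
      have hxw : x * Polynomial.aeval x p.divX = 0 := by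
        have := hev
        rw [hps, map_mul, Polynomial.aeval_X] at this
        exact this
      have hw0 : Polynomial.aeval x p.divX = 0 := by
        have h := Ring.inverse_mul_cancel x hu
        calc Polynomial.aeval x p.divX = (Ring.inverse x * x) * Polynomial.aeval x p.divX := by
              rw [h, one_mul]
          _ = Ring.inverse x * (x * Polynomial.aeval x p.divX) := by rw [mul_assoc]
          _ = 0 := by rw [hxw, mul_zero]
      have hdvx0 : p.divX ≠ 0 := by
        intro h
        apply hp0
        rw [hps, h, mul_zero]
      have hdegd : p.divX.natDegree ≤ N := by
        have := Polynomial.natDegree_divX_eq_natDegree_tsub_one (p := p)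
        omega
      exact ihN x S hx hu p.divX hdegd hdvx0 hw0
    · exact inverse_mem_of_coeff hx hu p hc hev

lemma inverse_mem {m : ℕ} {x : H} (hx : x ∈ Hsub m) (hu : IsUnit x) :
    Ring.inverse x ∈ Hsub m := by
  obtain ⟨p, hmonic, hev⟩ := isIntegral_Hsub hx
  exact inverse_mem_aux p.natDegree x (Hsub m) hx hu p le_rfl hmonic.ne_zero hev

lemma T_mem {i m : ℕ} (h1 : 1 ≤ i) (h2 : i + 1 ≤ m) : T i ∈ Hsub m :=
  Algebra.subset_adjoin (Set.mem_image_of_mem T ⟨h1, h2⟩)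

lemma y_mem : ∀ k m, k ≤ m → y k ∈ Hsub m := by
  intro k
  induction k using Nat.strong_induction_on with
  | _ k ih =>
    rcases k with _ | (_ | k)
    · intro m _; rw [show y 0 = 1 from rfl]; exact one_mem _
    · intro m _; rw [show y 1 = 1 from rfl]; exact one_mem _
    · intro m hm
      rw [show y (k + 2) = T (k + 1) * y (k + 1) * T (k + 1) from rfl]
      have hT : T (k + 1) ∈ Hsub m := T_mem (by omega) (by omega)
      exact mul_mem (mul_mem hT (ih (k + 1) (by omega) m (by omega))) hT

lemma commute_ring_inverse {a b : H} (h : Commute a b) (ha : IsUnit a) :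
    Commute (Ring.inverse a) b := by
  have h1 := Ring.mul_inverse_cancel a ha
  have h2 := Ring.inverse_mul_cancel a ha
  show Ring.inverse a * b = b * Ring.inverse a
  calc Ring.inverse a * b = Ring.inverse a * b * (a * Ring.inverse a) := by rw [h1, mul_one]
    _ = Ring.inverse a * (b * a) * Ring.inverse a := by simp only [mul_assoc]
    _ = Ring.inverse a * (a * b) * Ring.inverse a := by rw [← h.eq]
    _ = (Ring.inverse a * a) * (b * Ring.inverse a) := by simp only [mul_assoc]
    _ = b * Ring.inverse a := by rw [h2, one_mul]

lemma ccl (f : F) (x : H) : Commute (cc f) x := Algebra.commute_algebraMap_left f x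

lemma hccu (u : F) (z : H) : cc u * z = u • z := (Algebra.smul_def u z).symm

lemma final_combine (t u C : F) (x r rr : H) :
    x - t • (r - t • (C • r)) + (t * u) • rr - (t * t * u) • (C • rr)
      = x + (t * (1 - C * t)) • (u • rr - r) := by
  rw [smul_sub (t * (1 - C * t)) (u • rr) r, smul_smul (t * (1 - C * t)) u rr,
    smul_sub t r (t • (C • r)), smul_smul, smul_smul, smul_smul,
    show t * (1 - C * t) * u = t * u - t * t * u * C from by ring,
    show t * (1 - C * t) = t - t * t * C from by ring, sub_smul, sub_smul]
  abel

/-- For any family of conditional expectations with parameter `Q ∈ ℂ`,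
for `1 ≤ m ≤ n-1`, `t = q - q⁻¹`, and every scalar `u` with `u - y_m` and `u - y_{m+1}`
invertible,
`((u - q² y_m)(u - q⁻² y_m)/(u - y_m)²) Tr_{m+1}((u - y_{m+1})⁻¹)
   = Tr_m((u - y_m)⁻¹) + t(1 - Qt) y_m/(u - y_m)²`. -/
theorem stmt13 (Q₀ : ℂ) (tr : ℕ → H →ₗ[F] H) (htr : IsCondExp (RatFunc.C Q₀) tr)
    (n m : ℕ) (hm : 1 ≤ m) (hmn : m ≤ n - 1) (u : F)
    (h1 : IsUnit (cc u - y m)) (h2 : IsUnit (cc u - y (m + 1))) :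
    (cc u - q ^ (2 : ℤ) • y m) * (cc u - q ^ (-2 : ℤ) • y m) * (Ring.inverse (cc u - y m)) ^ 2 *
        tr (m + 1) (Ring.inverse (cc u - y (m + 1))) =
      tr m (Ring.inverse (cc u - y m)) +
        ((q - q⁻¹) * (1 - RatFunc.C Q₀ * (q - q⁻¹))) •
          (y m * (Ring.inverse (cc u - y m)) ^ 2) := by
  have hYrec : y (m + 1) = T m * y m * T m := by
    obtain ⟨k, rfl⟩ : ∃ k, m = k + 1 := ⟨m - 1, by omega⟩
    rfl
  simp only [pow_two]
  set Y : H := y (m + 1) with hYdef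
  set A : H := cc u - y m with hA
  set B : H := cc u - Y with hB
  set R : H := Ring.inverse A with hR
  set Sv : H := Ring.inverse B with hSv
  have hAR : A * R = 1 := Ring.mul_inverse_cancel A h1
  have hRA : R * A = 1 := Ring.inverse_mul_cancel A h1
  have hSB : Sv * B = 1 := Ring.inverse_mul_cancel B h2
  -- commutation facts
  have cyY : Commute (y m) Y := hYdef ▸ commute_y_y m
  have cAB : Commute A B :=
    ((ccl u B).sub_left (((ccl u (y m)).symm.sub_right cyY) : Commute (y m) B))
  have cRB : Commute R B := commute_ring_inverse cAB h1
  have cRY : Commute R Y := commute_ring_inverse ((ccl u Y).sub_left cyY) h1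
  -- basic relations
  have r3 : Y * T m = T m * y m + (q - q⁻¹) • Y := by
    rw [hYrec]
    calc T m * y m * T m * T m = T m * y m * (T m * T m) := by rw [mul_assoc]
      _ = T m * y m * (1 + (q - q⁻¹) • T m) := by rw [T_sq]
      _ = T m * y m + (q - q⁻¹) • (T m * y m * T m) := by rw [mul_add, mul_one, mul_smul_comm]
  have hwTinv : ∀ w : H, w * Tinv m = w * T m - (q - q⁻¹) • w := by
    intro w; rw [Tinv, mul_sub, mul_smul_comm, mul_one]
  have f4 : Y * Tinv m = T m * y m := by
    rw [hwTinv, r3, add_sub_cancel_right]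
  have e1' : T m * A = cc u * T m - T m * y m := by
    rw [hA, mul_sub, ← (ccl u (T m)).eq]
  have e2' : (q - q⁻¹) • cc u = ((q - q⁻¹) * u) • (1 : H) := by
    rw [show cc u = algebraMap F H u from rfl, Algebra.algebraMap_eq_smul_one, smul_smul]
  have f5 : B * Tinv m = T m * A - ((q - q⁻¹) * u) • 1 := by
    calc B * Tinv m = cc u * Tinv m - Y * Tinv m := by rw [hB, sub_mul]
      _ = (cc u * T m - (q - q⁻¹) • cc u) - T m * y m := by rw [hwTinv, f4]
      _ = (cc u * T m - T m * y m) - ((q - q⁻¹) * u) • 1 := by rw [e2']; abel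
      _ = T m * A - ((q - q⁻¹) * u) • 1 := by rw [e1']
  have f6 : B * T m = T m * A - (q - q⁻¹) • Y := by
    calc B * T m = cc u * T m - Y * T m := by rw [hB, sub_mul]
      _ = (cc u * T m - T m * y m) - (q - q⁻¹) • Y := by rw [r3]; abel
      _ = T m * A - (q - q⁻¹) • Y := by rw [e1']
  -- the key identity
  set E : H := Tinv m * R * Tinv m + ((q - q⁻¹) * u) • (R * (T m * R))
      - ((q - q⁻¹) * (q - q⁻¹) * u) • (R * R) with hE
  have P1 : B * (Tinv m * R * Tinv m) = 1 - ((q - q⁻¹) * u) • (R * Tinv m) := by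
    calc B * (Tinv m * R * Tinv m) = (B * Tinv m) * R * Tinv m := by simp only [mul_assoc]
      _ = (T m * A - ((q - q⁻¹) * u) • 1) * R * Tinv m := by rw [f5]
      _ = (T m * (A * R)) * Tinv m - ((q - q⁻¹) * u) • (R * Tinv m) := by
          rw [sub_mul, sub_mul, smul_mul_assoc, smul_mul_assoc, one_mul, mul_assoc (T m) A R]
      _ = 1 - ((q - q⁻¹) * u) • (R * Tinv m) := by rw [hAR, mul_one, T_mul_Tinv]
  have P2 : B * (R * (T m * R)) = R * T m - (q - q⁻¹) • (R * R * Y) := by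
    calc B * (R * (T m * R)) = (B * R) * (T m * R) := by rw [mul_assoc]
      _ = (R * B) * (T m * R) := by rw [← cRB.eq]
      _ = R * ((B * T m) * R) := by simp only [mul_assoc]
      _ = R * ((T m * A - (q - q⁻¹) • Y) * R) := by rw [f6]
      _ = R * (T m * (A * R)) - (q - q⁻¹) • (R * (Y * R)) := by
          rw [sub_mul, smul_mul_assoc, mul_sub, mul_smul_comm, mul_assoc (T m) A R]
      _ = R * T m - (q - q⁻¹) • (R * (R * Y)) := by rw [hAR, mul_one, ← cRY.eq]
      _ = R * T m - (q - q⁻¹) • (R * R * Y) := by rw [mul_assoc]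
  have cY_RR : Y * (R * R) = R * R * Y := by
    rw [(cRY.symm.mul_right cRY.symm).eq, mul_assoc]
  have P3 : B * (R * R) = u • (R * R) - R * R * Y := by
    calc B * (R * R) = cc u * (R * R) - Y * (R * R) := by rw [hB, sub_mul]
      _ = u • (R * R) - R * R * Y := by rw [hccu, cY_RR]
  have hyR2 : y m * (R * R) = u • (R * R) - R := by
    have h : y m = cc u - A := by rw [hA, sub_sub_cancel]
    calc y m * (R * R) = cc u * (R * R) - A * (R * R) := by rw [h, sub_mul]
      _ = u • (R * R) - R := by rw [hccu, ← mul_assoc, hAR, one_mul]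
  have K1 : B * E = 1 - ((q - q⁻¹) * (q - q⁻¹) * u) • (y m * (R * R)) := by
    rw [hE, mul_sub, mul_add, mul_smul_comm, mul_smul_comm, P1, P2, P3, hwTinv R, hyR2]
    simp only [smul_sub, smul_smul]
    ring_nf
    abel
  -- the quadratic factor
  have hq0 : (q : F) ≠ 0 := RatFunc.X_ne_zero
  have h2z : (q : F) ^ (2 : ℤ) = q * q := by
    rw [show (2 : ℤ) = 1 + 1 by norm_num, zpow_add₀ hq0, zpow_one]
  have hm2z : (q : F) ^ (-2 : ℤ) = (q * q)⁻¹ := by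
    rw [show (-2 : ℤ) = -(2 : ℤ) by norm_num, zpow_neg, h2z]
  have hqq : (q : F) ^ (2 : ℤ) * q ^ (-2 : ℤ) = 1 := by
    rw [h2z, hm2z]
    field_simp
  have hqsum : (q : F) ^ (2 : ℤ) + q ^ (-2 : ℤ) = (q - q⁻¹) * (q - q⁻¹) + 2 := by
    rw [h2z, hm2z]
    field_simp
    ring
  have hyc : y m * cc u = cc u * y m := ((ccl u (y m)).eq).symm
  have hcy : ∀ z : H, y m * (cc u * z) = cc u * (y m * z) := fun z => by
    rw [← mul_assoc, hyc, mul_assoc]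
  have expand : (cc u - q ^ (2 : ℤ) • y m) * (cc u - q ^ (-2 : ℤ) • y m)
      = cc u * cc u - (q ^ (2 : ℤ) + q ^ (-2 : ℤ)) • (cc u * y m) + y m * y m := by
    rw [sub_mul, mul_sub, mul_sub, mul_smul_comm, smul_mul_assoc, smul_mul_assoc,
      mul_smul_comm, hyc, smul_smul, hqq, one_smul, add_smul]
    abel
  have hAA1 : A * A * (R * R) = 1 := by
    calc A * A * (R * R) = A * ((A * R) * R) := by simp only [mul_assoc]
      _ = 1 := by rw [hAR, one_mul, hAR]
  have hAAexp : A * A = cc u * cc u - (2 : F) • (cc u * y m) + y m * y m := by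
    rw [hA, sub_mul, mul_sub, mul_sub, hyc, two_smul]
    abel
  have hX2 : (cc u - q ^ (2 : ℤ) • y m) * (cc u - q ^ (-2 : ℤ) • y m)
      = A * A - ((q - q⁻¹) * (q - q⁻¹)) • (cc u * y m) := by
    rw [expand, hqsum, hAAexp, add_smul]
    abel
  have Dfact : (cc u - q ^ (2 : ℤ) • y m) * (cc u - q ^ (-2 : ℤ) • y m) * (R * R)
      = 1 - ((q - q⁻¹) * (q - q⁻¹) * u) • (y m * (R * R)) := by
    rw [hX2, sub_mul, smul_mul_assoc, hAA1, mul_assoc, hccu, smul_smul]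
  have hSvE : Sv * ((cc u - q ^ (2 : ℤ) • y m) * (cc u - q ^ (-2 : ℤ) • y m) * (R * R)) = E := by
    rw [Dfact, ← K1, ← mul_assoc, hSB, one_mul]
  have hyB : Commute (y m) B := (ccl u (y m)).symm.sub_right cyY
  have cXB : Commute ((cc u - q ^ (2 : ℤ) • y m) * (cc u - q ^ (-2 : ℤ) • y m) * (R * R)) B := by
    have ha' : Commute (cc u - q ^ (2 : ℤ) • y m) B := (ccl u B).sub_left (hyB.smul_left _)
    have hb' : Commute (cc u - q ^ (-2 : ℤ) • y m) B := (ccl u B).sub_left (hyB.smul_left _)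
    exact (ha'.mul_left hb').mul_left (cRB.mul_left cRB)
  have cXSv : Commute ((cc u - q ^ (2 : ℤ) • y m) * (cc u - q ^ (-2 : ℤ) • y m) * (R * R)) Sv := by
    rw [hSv]
    exact (commute_ring_inverse cXB.symm h2).symm
  have hXSv : (cc u - q ^ (2 : ℤ) • y m) * (cc u - q ^ (-2 : ℤ) • y m) * (R * R) * Sv = E := by
    rw [cXSv.eq, hSvE]
  -- memberships
  have hymem : y m ∈ Hsub m := y_mem m m le_rfl
  have hAmem : A ∈ Hsub m := by
    rw [hA]; exact sub_mem (Subalgebra.algebraMap_mem _ u) hymem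
  have hRmem : R ∈ Hsub m := by
    rw [hR]; exact inverse_mem hAmem h1
  have hBmem : B ∈ Hsub (m + 1) := by
    rw [hB, hYdef]
    exact sub_mem (Subalgebra.algebraMap_mem _ u) (y_mem (m + 1) (m + 1) le_rfl)
  have hSvmem : Sv ∈ Hsub (m + 1) := by
    rw [hSv]; exact inverse_mem hBmem h2
  have hTmem : T m ∈ Hsub (m + 1) := T_mem hm (by omega)
  have hXmem : (cc u - q ^ (2 : ℤ) • y m) * (cc u - q ^ (-2 : ℤ) • y m) * (R * R) ∈ Hsub m := by
    refine mul_mem (mul_mem ?_ ?_) (mul_mem hRmem hRmem) <;>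
      exact sub_mem (Subalgebra.algebraMap_mem _ u) (Subalgebra.smul_mem _ hymem _)
  -- trace computation
  have hbimod := htr.bimod (m + 1) (by omega) _ hXmem 1 (one_mem _) Sv hSvmem
  simp only [mul_one] at hbimod
  rw [← hbimod, hXSv]
  have e1 : tr (m + 1) (Tinv m * R * T m) = tr m R := htr.conj' m hm R hRmem
  have e2 : tr (m + 1) (T m * R) = R := by
    have h := htr.bimod (m + 1) (by omega) 1 (one_mem _) R hRmem (T m) hTmem
    simp only [one_mul] at h
    rw [h, htr.genOne m hm, one_mul]
  have e3 : tr (m + 1) R = RatFunc.C Q₀ • R := htr.scalar (m + 1) (by omega) R hRmem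
  have e4 : tr (m + 1) (R * (T m * R)) = R * R := by
    have h := htr.bimod (m + 1) (by omega) R hRmem R hRmem (T m) hTmem
    rw [htr.genOne m hm, mul_one] at h
    rw [← mul_assoc, h]
  have e5 : tr (m + 1) (R * R) = RatFunc.C Q₀ • (R * R) :=
    htr.scalar (m + 1) (by omega) _ (mul_mem hRmem hRmem)
  have hTRT : Tinv m * R * Tinv m = Tinv m * R * T m - (q - q⁻¹) • (Tinv m * R) := hwTinv _
  have hTR : Tinv m * R = T m * R - (q - q⁻¹) • R := by
    rw [Tinv, sub_mul, smul_mul_assoc, one_mul]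
  rw [hE, map_sub, map_add, map_smul, map_smul, e4, e5, hTRT, map_sub, map_smul, e1,
    hTR, map_sub, map_smul, e2, e3, hyR2]
  exact final_combine (q - q⁻¹) u (RatFunc.C Q₀) (tr m R) R (R * R)

end HeckePaper
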